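/- The spectrum of the triangular-lattice Laplacian Δ_T, as a bounded operator on ℓ²(ℤ²,ℂ), equals the closed interval [−1/2, 1]. -/

import Mathlib

open scoped ENNReal
open Filter

noncomputable section

/-- The Hilbert space `ℓ²(ℤ², ℂ)`. -/
abbrev H2 : Type := lp (fun _ : ℤ × ℤ => ℂ) 2

/-- The triangular-lattice Laplacian, acting pointwise on functions `ℤ² → ℂ`. -/
def lapT (f : ℤ × ℤ → ℂ) : ℤ × ℤ → ℂ := fun n =>
  (1/6 : ℂ) * (f (n.1 + 1, n.2) + f (n.1 - 1, n.2) + f (n.1, n.2 + 1)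
    + f (n.1, n.2 - 1) + f (n.1 + 1, n.2 - 1) + f (n.1 - 1, n.2 + 1))

/-- The symbol `F(x₁,x₂) = (1/3)(cos x₁ + cos x₂ + cos (x₁ - x₂))`. -/
def symbF (x : ℝ × ℝ) : ℝ := (1/3) * (Real.cos x.1 + Real.cos x.2 + Real.cos (x.1 - x.2))

/-- `∂₁ F`. -/
def d1F (x : ℝ × ℝ) : ℝ := -(1/3) * (Real.sin x.1 + Real.sin (x.1 - x.2))

/-- `∂₂ F`. -/
def d2F (x : ℝ × ℝ) : ℝ := -(1/3) * (Real.sin x.2 - Real.sin (x.1 - x.2))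

/-- Japanese bracket `⟨t⟩ = √(1/2 + t²)`. -/
def jap (t : ℝ) : ℝ := Real.sqrt (1/2 + t^2)

/-- The weight `Λ(n₁,n₂) = ⟨n₁⟩ + ⟨n₂⟩`. -/
def Lam (n : ℤ × ℤ) : ℝ := jap (n.1 : ℝ) + jap (n.2 : ℝ)

/-- The conjugate operator `A`, acting pointwise on functions `ℤ² → ℂ`. -/
def opA (f : ℤ × ℤ → ℂ) : ℤ × ℤ → ℂ := fun n =>
  (Complex.I / 6) *
    (((n.1 : ℂ) + 1/2) * f (n.1 + 1, n.2) - ((n.1 : ℂ) - 1/2) * f (n.1 - 1, n.2)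
      + ((n.2 : ℂ) + 1/2) * f (n.1, n.2 + 1) - ((n.2 : ℂ) - 1/2) * f (n.1, n.2 - 1)
      + ((n.2 : ℂ) - (n.1 : ℂ) + 1) * f (n.1 - 1, n.2 + 1)
      + ((n.1 : ℂ) - (n.2 : ℂ) + 1) * f (n.1 + 1, n.2 - 1))

/-- The perturbed Laplacian `Δ̃` with weight `m`, acting pointwise on functions `ℤ² → ℂ`:
`(Δ̃ f)(n) = (1/6) Σ_{l ∼ n} f(l) / (√(m n) √(m l))`. -/
def lapPert (m : ℤ × ℤ → ℝ) (f : ℤ × ℤ → ℂ) : ℤ × ℤ → ℂ := fun n =>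
  (1/6 : ℂ) *
    (f (n.1 + 1, n.2) / ((Real.sqrt (m n) * Real.sqrt (m (n.1 + 1, n.2)) : ℝ) : ℂ)
      + f (n.1 - 1, n.2) / ((Real.sqrt (m n) * Real.sqrt (m (n.1 - 1, n.2)) : ℝ) : ℂ)
      + f (n.1, n.2 + 1) / ((Real.sqrt (m n) * Real.sqrt (m (n.1, n.2 + 1)) : ℝ) : ℂ)
      + f (n.1, n.2 - 1) / ((Real.sqrt (m n) * Real.sqrt (m (n.1, n.2 - 1)) : ℝ) : ℂ)
      + f (n.1 + 1, n.2 - 1) / ((Real.sqrt (m n) * Real.sqrt (m (n.1 + 1, n.2 - 1)) : ℝ) : ℂ)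
      + f (n.1 - 1, n.2 + 1) / ((Real.sqrt (m n) * Real.sqrt (m (n.1 - 1, n.2 + 1)) : ℝ) : ℂ))

namespace TriAux

open Complex
open scoped InnerProductSpace


lemma summable_sq {f : ℤ × ℤ → ℂ} (hf : Memℓp f 2) :
    Summable (fun n : ℤ × ℤ => ‖f n‖ ^ 2) := by
  have h := hf.summable (p := 2) (by norm_num)
  simpa [Real.rpow_natCast] using h

lemma summable_shift_sq {f : ℤ × ℤ → ℂ} (hf : Memℓp f 2) (v : ℤ × ℤ) :
    Summable (fun n : ℤ × ℤ => ‖f (n + v)‖ ^ 2) :=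
  (summable_sq hf).comp_injective (Equiv.addRight v).injective

lemma summable_mul {f g : ℤ × ℤ → ℂ} (hf : Memℓp f 2) (hg : Memℓp g 2) (v w : ℤ × ℤ) :
    Summable (fun n : ℤ × ℤ => (starRingEnd ℂ) (f (n + v)) * g (n + w)) := by
  apply Summable.of_norm
  refine Summable.of_nonneg_of_le (fun n => norm_nonneg _) (fun n => ?_)
    (((summable_shift_sq hf v).add (summable_shift_sq hg w)).div_const 2)
  rw [norm_mul, RCLike.norm_conj]
  nlinarith [norm_nonneg (f (n+v)), norm_nonneg (g (n+w)),
    sq_nonneg (‖f (n+v)‖ - ‖g (n+w)‖)]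

lemma summable_mul' {f g : ℤ × ℤ → ℂ} (hf : Memℓp f 2) (hg : Memℓp g 2) (v : ℤ × ℤ) :
    Summable (fun n : ℤ × ℤ => (starRingEnd ℂ) (f n) * g (n + v)) := by
  simpa using summable_mul hf hg 0 v

lemma summable_mul'' {f g : ℤ × ℤ → ℂ} (hf : Memℓp f 2) (hg : Memℓp g 2) (v : ℤ × ℤ) :
    Summable (fun n : ℤ × ℤ => (starRingEnd ℂ) (f (n + v)) * g n) := by
  simpa using summable_mul hf hg v 0

def itsum (f g : ℤ × ℤ → ℂ) (v : ℤ × ℤ) : ℂ := ∑' n, (starRingEnd ℂ) (f n) * g (n + v)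

lemma itsum_eq (f g : ℤ × ℤ → ℂ) (v w : ℤ × ℤ) (h : v + w = 0) :
    ∑' n, (starRingEnd ℂ) (f (n + v)) * g n = itsum f g w := by
  rw [itsum, ← (Equiv.addRight v).tsum_eq (fun n => (starRingEnd ℂ) (f n) * g (n + w))]
  have h2 : ∀ n : ℤ × ℤ, n + v + w = n := by intro n; rw [add_assoc, h, add_zero]
  simp only [Equiv.coe_addRight, h2]

lemma addv (n v : ℤ × ℤ) : n + v = (n.1 + v.1, n.2 + v.2) := rfl

lemma lapT_eq (f : ℤ × ℤ → ℂ) (n : ℤ × ℤ) : lapT f n =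
    (1/6 : ℂ) * (f (n + (1,0)) + f (n + (-1,0)) + f (n + (0,1))
      + f (n + (0,-1)) + f (n + (1,-1)) + f (n + (-1,1))) := by
  unfold lapT
  norm_num [addv, sub_eq_add_neg]

def sixSum (f g : ℤ × ℤ → ℂ) : ℂ :=
  itsum f g (1,0) + itsum f g (-1,0) + itsum f g (0,1) + itsum f g (0,-1)
    + itsum f g (1,-1) + itsum f g (-1,1)

lemma tsum_six {a b c d e k : ℤ × ℤ → ℂ} (ha : Summable a) (hb : Summable b)
    (hc : Summable c) (hd : Summable d) (he : Summable e) (hk : Summable k) :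
    ∑' n, (a n + b n + c n + d n + e n + k n)
      = ∑' n, a n + ∑' n, b n + ∑' n, c n + ∑' n, d n + ∑' n, e n + ∑' n, k n := by
  rw [Summable.tsum_add ((((ha.add hb).add hc).add hd).add he) hk,
    Summable.tsum_add (((ha.add hb).add hc).add hd) he,
    Summable.tsum_add ((ha.add hb).add hc) hd, Summable.tsum_add (ha.add hb) hc, Summable.tsum_add ha hb]

lemma inner_fTg (T : H2 →L[ℂ] H2)
    (hT : ∀ (f : H2) (n : ℤ × ℤ), T f n = lapT (⇑f) n) (f g : H2) :
    ⟪f, T g⟫_ℂ = (1/6 : ℂ) * sixSum (⇑f) (⇑g) := by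
  rw [lp.inner_eq_tsum]
  have h1 : ∀ n : ℤ × ℤ, ⟪f n, T g n⟫_ℂ
      = (1/6 : ℂ) * ((starRingEnd ℂ) (f n) * g (n + (1,0))
        + (starRingEnd ℂ) (f n) * g (n + (-1,0)) + (starRingEnd ℂ) (f n) * g (n + (0,1))
        + (starRingEnd ℂ) (f n) * g (n + (0,-1)) + (starRingEnd ℂ) (f n) * g (n + (1,-1))
        + (starRingEnd ℂ) (f n) * g (n + (-1,1))) := by
    intro n
    rw [RCLike.inner_apply, hT g n, lapT_eq]
    ring
  rw [tsum_congr h1, tsum_mul_left]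
  have hf := lp.memℓp f
  have hg := lp.memℓp g
  rw [tsum_six (summable_mul' hf hg _) (summable_mul' hf hg _) (summable_mul' hf hg _)
    (summable_mul' hf hg _) (summable_mul' hf hg _) (summable_mul' hf hg _)]
  rfl

lemma inner_Tfg (T : H2 →L[ℂ] H2)
    (hT : ∀ (f : H2) (n : ℤ × ℤ), T f n = lapT (⇑f) n) (f g : H2) :
    ⟪T f, g⟫_ℂ = (1/6 : ℂ) * sixSum (⇑f) (⇑g) := by
  rw [lp.inner_eq_tsum]
  have h1 : ∀ n : ℤ × ℤ, ⟪T f n, g n⟫_ℂ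
      = (1/6 : ℂ) * ((starRingEnd ℂ) (f (n + (1,0))) * g n
        + (starRingEnd ℂ) (f (n + (-1,0))) * g n + (starRingEnd ℂ) (f (n + (0,1))) * g n
        + (starRingEnd ℂ) (f (n + (0,-1))) * g n + (starRingEnd ℂ) (f (n + (1,-1))) * g n
        + (starRingEnd ℂ) (f (n + (-1,1))) * g n) := by
    intro n
    rw [RCLike.inner_apply, hT f n, lapT_eq]
    simp only [map_mul, map_add, map_div₀, map_one, map_ofNat]
    ring
  rw [tsum_congr h1, tsum_mul_left]
  have hf := lp.memℓp f
  have hg := lp.memℓp g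
  rw [tsum_six (summable_mul'' hf hg _) (summable_mul'' hf hg _) (summable_mul'' hf hg _)
    (summable_mul'' hf hg _) (summable_mul'' hf hg _) (summable_mul'' hf hg _),
    itsum_eq _ _ _ (-1,0) (by decide), itsum_eq _ _ _ (1,0) (by decide),
    itsum_eq _ _ _ (0,-1) (by decide), itsum_eq _ _ _ (0,1) (by decide),
    itsum_eq _ _ _ (-1,1) (by decide), itsum_eq _ _ _ (1,-1) (by decide)]
  unfold sixSum
  ring

lemma tsum_shift (F : ℤ × ℤ → ℝ) (v : ℤ × ℤ) : ∑' n, F (n + v) = ∑' n, F n :=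
  (Equiv.addRight v).tsum_eq F

lemma norm_sq_eq (f : H2) : ‖f‖ ^ 2 = ∑' n, ‖f n‖ ^ 2 := by
  have h := lp.norm_rpow_eq_tsum (p := 2) (by norm_num) f
  simpa [Real.rpow_natCast] using h

-- re of itsum
lemma itsum_re {f g : ℤ × ℤ → ℂ} (hf : Memℓp f 2) (hg : Memℓp g 2) (v : ℤ × ℤ) :
    (itsum f g v).re = ∑' n, ((starRingEnd ℂ) (f n) * g (n + v)).re := by
  have := Complex.reCLM.map_tsum (summable_mul' hf hg v)
  simpa [itsum] using this

lemma summable_re {f g : ℤ × ℤ → ℂ} (hf : Memℓp f 2) (hg : Memℓp g 2) (v : ℤ × ℤ) :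
    Summable (fun n => ((starRingEnd ℂ) (f n) * g (n + v)).re) :=
  (summable_mul' hf hg v).mapL Complex.reCLM

lemma re_term_le {f : ℤ × ℤ → ℂ} (n : ℤ × ℤ) (v : ℤ × ℤ) :
    ((starRingEnd ℂ) (f n) * f (n + v)).re ≤ (‖f n‖ ^ 2 + ‖f (n + v)‖ ^ 2) / 2 := by
  have h1 : ((starRingEnd ℂ) (f n) * f (n + v)).re ≤ ‖(starRingEnd ℂ) (f n) * f (n + v)‖ :=
    Complex.re_le_norm _
  rw [norm_mul, RCLike.norm_conj] at h1
  nlinarith [norm_nonneg (f n), norm_nonneg (f (n + v)), sq_nonneg (‖f n‖ - ‖f (n + v)‖)]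

lemma itsum_re_le {f : ℤ × ℤ → ℂ} (hf : Memℓp f 2) (v : ℤ × ℤ) :
    (itsum f f v).re ≤ ∑' n, ‖f n‖ ^ 2 := by
  rw [itsum_re hf hf v]
  have h1 : ∑' n, ((starRingEnd ℂ) (f n) * f (n + v)).re
      ≤ ∑' n : ℤ × ℤ, (‖f n‖ ^ 2 + ‖f (n + v)‖ ^ 2) / 2 :=
    Summable.tsum_le_tsum (fun n => re_term_le n v) (summable_re hf hf v)
      (((summable_sq hf).add (summable_shift_sq hf v)).div_const 2)
  refine h1.trans (le_of_eq ?_)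
  rw [tsum_div_const, Summable.tsum_add (summable_sq hf) (summable_shift_sq hf v),
    tsum_shift (fun n => ‖f n‖ ^ 2) v]
  ring

lemma itsum_re_pair {f : ℤ × ℤ → ℂ} (v w : ℤ × ℤ) (h : v + w = 0) :
    (itsum f f w).re = (itsum f f v).re := by
  have hc : itsum f f w = (starRingEnd ℂ) (itsum f f v) := by
    calc itsum f f w = ∑' n, (starRingEnd ℂ) (f (n + v)) * f n := (itsum_eq f f v w h).symm
      _ = ∑' n, star ((starRingEnd ℂ) (f n) * f (n + v)) :=
          tsum_congr fun n => by simp [mul_comm]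
      _ = star (∑' n, (starRingEnd ℂ) (f n) * f (n + v)) := tsum_star.symm
      _ = (starRingEnd ℂ) (itsum f f v) := rfl
  rw [hc, Complex.conj_re]

lemma expand3 (a b c : ℂ) : ‖a + b + c‖ ^ 2
    = ‖a‖ ^ 2 + ‖b‖ ^ 2 + ‖c‖ ^ 2
      + (2 * ((starRingEnd ℂ) a * b).re + 2 * ((starRingEnd ℂ) a * c).re
        + 2 * ((starRingEnd ℂ) b * c).re) := by
  simp only [Complex.sq_norm, Complex.normSq_apply, Complex.add_re,
    Complex.add_im, Complex.mul_re, Complex.mul_im, Complex.conj_re, Complex.conj_im]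
  ring

lemma tsum_six_real {a b c d e k : ℤ × ℤ → ℝ} (ha : Summable a) (hb : Summable b)
    (hc : Summable c) (hd : Summable d) (he : Summable e) (hk : Summable k) :
    ∑' n, (a n + b n + c n + d n + e n + k n)
      = ∑' n, a n + ∑' n, b n + ∑' n, c n + ∑' n, d n + ∑' n, e n + ∑' n, k n := by
  rw [Summable.tsum_add ((((ha.add hb).add hc).add hd).add he) hk,
    Summable.tsum_add (((ha.add hb).add hc).add hd) he,
    Summable.tsum_add ((ha.add hb).add hc) hd, Summable.tsum_add (ha.add hb) hc, Summable.tsum_add ha hb]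

lemma itsum_eq2 (f g : ℤ × ℤ → ℂ) (v w u : ℤ × ℤ) (h : v + u = w) :
    ∑' n, (starRingEnd ℂ) (f (n + v)) * g (n + w) = itsum f g u := by
  rw [itsum, ← (Equiv.addRight v).tsum_eq (fun n => (starRingEnd ℂ) (f n) * g (n + u))]
  have h2 : ∀ n : ℤ × ℤ, n + v + u = n + w := fun n => by rw [add_assoc, h]
  simp only [Equiv.coe_addRight, h2]

lemma summable_mul2 {f g : ℤ × ℤ → ℂ} (hf : Memℓp f 2) (hg : Memℓp g 2) (v w : ℤ × ℤ) :
    Summable (fun n : ℤ × ℤ => (starRingEnd ℂ) (f (n + v)) * g (n + w)) := by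
  apply Summable.of_norm
  refine Summable.of_nonneg_of_le (fun n => norm_nonneg _) (fun n => ?_)
    (((summable_shift_sq hf v).add (summable_shift_sq hg w)).div_const 2)
  rw [norm_mul, RCLike.norm_conj]
  nlinarith [norm_nonneg (f (n+v)), norm_nonneg (g (n+w)),
    sq_nonneg (‖f (n+v)‖ - ‖g (n+w)‖)]

lemma summable_re2 {f g : ℤ × ℤ → ℂ} (hf : Memℓp f 2) (hg : Memℓp g 2) (v w : ℤ × ℤ) :
    Summable (fun n => ((starRingEnd ℂ) (f (n + v)) * g (n + w)).re) :=
  (summable_mul2 hf hg v w).mapL Complex.reCLM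

lemma triangle_ineq {f : ℤ × ℤ → ℂ} (hf : Memℓp f 2) :
    0 ≤ 3 * (∑' n, ‖f n‖ ^ 2)
      + (2 * (itsum f f (1,0)).re + 2 * (itsum f f (0,1)).re
        + 2 * (itsum f f (-1,1)).re) := by
  have key : ∀ n : ℤ × ℤ, ‖f n + f (n + (1,0)) + f (n + (0,1))‖ ^ 2
      = ‖f n‖ ^ 2 + ‖f (n + (1,0))‖ ^ 2 + ‖f (n + (0,1))‖ ^ 2
        + (2 * ((starRingEnd ℂ) (f n) * f (n + (1,0))).re)
        + (2 * ((starRingEnd ℂ) (f n) * f (n + (0,1))).re)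
        + (2 * ((starRingEnd ℂ) (f (n + (1,0))) * f (n + (0,1))).re) := by
    intro n
    have := expand3 (f n) (f (n + (1,0))) (f (n + (0,1)))
    linarith
  have h0 : (0:ℝ) ≤ ∑' n, ‖f n + f (n + (1,0)) + f (n + (0,1))‖ ^ 2 :=
    tsum_nonneg fun n => sq_nonneg _
  rw [tsum_congr key] at h0
  rw [tsum_six_real (summable_sq hf) (summable_shift_sq hf _) (summable_shift_sq hf _)
    ((summable_re hf hf _).mul_left 2) ((summable_re hf hf _).mul_left 2)
    ((summable_re2 hf hf (1,0) (0,1)).mul_left 2)] at h0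
  rw [tsum_shift (fun n => ‖f n‖ ^ 2) (1,0), tsum_shift (fun n => ‖f n‖ ^ 2) (0,1)] at h0
  rw [tsum_mul_left, tsum_mul_left, tsum_mul_left] at h0
  have e1 : ∑' n, ((starRingEnd ℂ) (f n) * f (n + (1,0))).re = (itsum f f (1,0)).re :=
    (itsum_re hf hf _).symm
  have e2 : ∑' n, ((starRingEnd ℂ) (f n) * f (n + (0,1))).re = (itsum f f (0,1)).re :=
    (itsum_re hf hf _).symm
  have e3 : ∑' (n : ℤ × ℤ), ((starRingEnd ℂ) (f (n + (1,0))) * f (n + (0,1))).re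
      = (itsum f f (-1,1)).re := by
    have hc := Complex.reCLM.map_tsum (summable_mul2 hf hf (1,0) (0,1))
    have := itsum_eq2 f f (1,0) (0,1) (-1,1) (by decide)
    rw [this] at hc
    simpa using hc.symm
  rw [e1, e2, e3] at h0
  linarith

section Op
variable (T : H2 →L[ℂ] H2) (hT : ∀ (f : H2) (n : ℤ × ℤ), T f n = lapT (⇑f) n)
include hT

lemma T_selfAdjoint : IsSelfAdjoint T := by
  rw [ContinuousLinearMap.isSelfAdjoint_iff_isSymmetric]
  intro f g
  have h1 := inner_Tfg T hT f g
  have h2 := inner_fTg T hT f g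
  simpa using h1.trans h2.symm

omit hT in
lemma re_sixSum (f : H2) : ((1/6 : ℂ) * sixSum (⇑f) (⇑f)).re
    = (1/3) * ((itsum (⇑f) (⇑f) (1,0)).re + (itsum (⇑f) (⇑f) (0,1)).re
      + (itsum (⇑f) (⇑f) (-1,1)).re) := by
  have p1 : (itsum (⇑f) (⇑f) ((-1:ℤ),(0:ℤ))).re = (itsum (⇑f) (⇑f) (1,0)).re :=
    itsum_re_pair (1,0) (-1,0) (by decide)
  have p2 : (itsum (⇑f) (⇑f) ((0:ℤ),(-1:ℤ))).re = (itsum (⇑f) (⇑f) (0,1)).re :=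
    itsum_re_pair (0,1) (0,-1) (by decide)
  have p3 : (itsum (⇑f) (⇑f) ((1:ℤ),(-1:ℤ))).re = (itsum (⇑f) (⇑f) (-1,1)).re :=
    itsum_re_pair (-1,1) (1,-1) (by decide)
  simp only [sixSum, Complex.mul_re, Complex.add_re, Complex.add_im]
  rw [p1, p2, p3]
  norm_num
  ring

lemma re_inner_T_le (f : H2) : (⟪T f, f⟫_ℂ).re ≤ ‖f‖ ^ 2 := by
  rw [inner_Tfg T hT f f, re_sixSum, norm_sq_eq]
  have hf := lp.memℓp f
  have h1 := itsum_re_le hf ((1:ℤ),(0:ℤ))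
  have h2 := itsum_re_le hf ((0:ℤ),(1:ℤ))
  have h3 := itsum_re_le hf ((-1:ℤ),(1:ℤ))
  linarith

lemma re_inner_T_ge (f : H2) : -(1/2) * ‖f‖ ^ 2 ≤ (⟪T f, f⟫_ℂ).re := by
  rw [inner_Tfg T hT f f, re_sixSum, norm_sq_eq]
  have hf := lp.memℓp f
  have h := triangle_ineq hf
  linarith

end Op

section Op2
variable (T : H2 →L[ℂ] H2) (hT : ∀ (f : H2) (n : ℤ × ℤ), T f n = lapT (⇑f) n)
include hT

lemma pos_half_add : (algebraMap ℂ (H2 →L[ℂ] H2) (1/2) + T).IsPositive := by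
  constructor
  · have h1 : IsSelfAdjoint (algebraMap ℂ (H2 →L[ℂ] H2) (1/2)) := by
      rw [IsSelfAdjoint, ← algebraMap_star_comm]
      norm_num
    exact ContinuousLinearMap.isSelfAdjoint_iff_isSymmetric.mp (h1.add (T_selfAdjoint T hT))
  · intro x
    have hx : (algebraMap ℂ (H2 →L[ℂ] H2) (1/2) + T).reApplyInnerSelf x
        = (1/2) * ‖x‖ ^ 2 + (⟪T x, x⟫_ℂ).re := by
      rw [ContinuousLinearMap.reApplyInnerSelf, ContinuousLinearMap.add_apply, inner_add_left,
        Algebra.algebraMap_eq_smul_one, ContinuousLinearMap.smul_apply,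
        ContinuousLinearMap.one_apply, inner_smul_left]
      have him := inner_self_im (𝕜 := ℂ) (x := x)
      have hre := inner_self_eq_norm_sq (𝕜 := ℂ) (x := x)
      simp only [RCLike.re_to_complex, RCLike.im_to_complex, map_div₀, map_one, map_ofNat, Complex.add_re, Complex.mul_re] at *
      rw [him, hre]
      norm_num
    rw [hx]
    have := re_inner_T_ge T hT x
    linarith

lemma pos_one_sub : (algebraMap ℂ (H2 →L[ℂ] H2) 1 - T).IsPositive := by
  constructor
  · have h1 : IsSelfAdjoint (algebraMap ℂ (H2 →L[ℂ] H2) 1) := by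
      rw [IsSelfAdjoint, ← algebraMap_star_comm]
      norm_num
    exact ContinuousLinearMap.isSelfAdjoint_iff_isSymmetric.mp (h1.sub (T_selfAdjoint T hT))
  · intro x
    have hx : (algebraMap ℂ (H2 →L[ℂ] H2) 1 - T).reApplyInnerSelf x
        = ‖x‖ ^ 2 - (⟪T x, x⟫_ℂ).re := by
      rw [ContinuousLinearMap.reApplyInnerSelf, ContinuousLinearMap.sub_apply, inner_sub_left,
        Algebra.algebraMap_eq_smul_one, ContinuousLinearMap.smul_apply,
        ContinuousLinearMap.one_apply, inner_smul_left]
      have him := inner_self_im (𝕜 := ℂ) (x := x)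
      have hre := inner_self_eq_norm_sq (𝕜 := ℂ) (x := x)
      simp only [RCLike.re_to_complex, RCLike.im_to_complex, map_one, Complex.sub_re, Complex.mul_re, Complex.one_re, Complex.one_im] at *
      rw [him, hre]
      norm_num
    rw [hx]
    have := re_inner_T_le T hT x
    linarith

end Op2

lemma pos_re_nonneg {P : H2 →L[ℂ] H2} (hP : P.IsPositive) {z : ℂ}
    (hz : z ∈ spectrum ℂ P) : 0 ≤ z.re := by
  by_contra hneg
  push_neg at hneg
  have hunit : IsUnit (algebraMap ℂ (H2 →L[ℂ] H2) z - P) := by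
    have hc : (0:ℝ) < -z.re := by linarith
    apply ContinuousLinearMap.isUnit_of_forall_le_norm_inner_map _ (c := ⟨-z.re, hc.le⟩)
      (by exact_mod_cast hc)
    intro x
    have hzre : z = (z.re : ℂ) := hP.isSelfAdjoint.mem_spectrum_eq_re hz
    have hre : (⟪(algebraMap ℂ (H2 →L[ℂ] H2) z - P) x, x⟫_ℂ).re
        = z.re * ‖x‖ ^ 2 - (⟪P x, x⟫_ℂ).re := by
      rw [ContinuousLinearMap.sub_apply, inner_sub_left,
        Algebra.algebraMap_eq_smul_one, ContinuousLinearMap.smul_apply,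
        ContinuousLinearMap.one_apply, inner_smul_left]
      have him := inner_self_im (𝕜 := ℂ) (x := x)
      have hre2 := inner_self_eq_norm_sq (𝕜 := ℂ) (x := x)
      rw [hzre]
      simp only [RCLike.re_to_complex, RCLike.im_to_complex, Complex.sub_re, Complex.mul_re,
        Complex.conj_re, Complex.conj_im, Complex.ofReal_re, Complex.ofReal_im] at *
      rw [him, hre2]
      ring
    have hPx : 0 ≤ (⟪P x, x⟫_ℂ).re := (Complex.nonneg_iff.mp (hP.inner_nonneg_left x)).1
    have habs : -((⟪(algebraMap ℂ (H2 →L[ℂ] H2) z - P) x, x⟫_ℂ).re)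
        ≤ ‖⟪(algebraMap ℂ (H2 →L[ℂ] H2) z - P) x, x⟫_ℂ‖ := by
      have := Complex.abs_re_le_norm (⟪(algebraMap ℂ (H2 →L[ℂ] H2) z - P) x, x⟫_ℂ)
      cases abs_cases ((⟪(algebraMap ℂ (H2 →L[ℂ] H2) z - P) x, x⟫_ℂ).re) with
      | inl h => linarith [h.1]
      | inr h => linarith [h.1]
    have : ‖x‖ ^ 2 * (-z.re) ≤ ‖⟪(algebraMap ℂ (H2 →L[ℂ] H2) z - P) x, x⟫_ℂ‖ := by
      rw [hre] at habs
      have : ‖x‖ ^ 2 * (-z.re) ≤ -(z.re * ‖x‖ ^ 2 - (⟪P x, x⟫_ℂ).re) := by nlinarith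
      linarith
    exact_mod_cast this
  exact (spectrum.mem_iff.mp hz) hunit

lemma spec_subset (T : H2 →L[ℂ] H2) (hT : ∀ (f : H2) (n : ℤ × ℤ), T f n = lapT (⇑f) n) :
    spectrum ℂ T ⊆ Complex.ofReal '' Set.Icc (-(1/2) : ℝ) 1 := by
  intro z hz
  have hsa := T_selfAdjoint T hT
  have hzre : z = (z.re : ℂ) := hsa.mem_spectrum_eq_re hz
  have h1 : (1/2 : ℂ) + z ∈ spectrum ℂ (algebraMap ℂ (H2 →L[ℂ] H2) (1/2) + T) := by
    rw [← spectrum.singleton_add_eq]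
    exact Set.add_mem_add rfl hz
  have hge := pos_re_nonneg (pos_half_add T hT) h1
  have h2 : (1 : ℂ) - z ∈ spectrum ℂ (algebraMap ℂ (H2 →L[ℂ] H2) 1 - T) := by
    rw [← spectrum.singleton_sub_eq]
    exact Set.sub_mem_sub rfl hz
  have hle := pos_re_nonneg (pos_one_sub T hT) h2
  simp only [Complex.add_re, Complex.sub_re, Complex.one_re] at hge hle
  refine ⟨z.re, ⟨?_, ?_⟩, hzre.symm⟩
  · norm_num at hge ⊢; linarith
  · linarith

def gsym (x : ℝ) : ℝ := (1/3) * (2 * Real.cos x + Real.cos (2 * x))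

lemma gsym_surj {t : ℝ} (ht : t ∈ Set.Icc (-(1/2) : ℝ) 1) : ∃ x : ℝ, gsym x = t := by
  have hc : ContinuousOn gsym (Set.Icc 0 (2 * Real.pi / 3)) := by
    apply Continuous.continuousOn; unfold gsym; fun_prop
  have h0 : gsym 0 = 1 := by norm_num [gsym]
  have h1 : gsym (2 * Real.pi / 3) = -(1/2) := by
    unfold gsym
    have e1 : 2 * Real.pi / 3 = Real.pi - Real.pi / 3 := by ring
    have e2 : 2 * (2 * Real.pi / 3) = 2 * Real.pi - 2 * Real.pi / 3 := by ring
    rw [e2, Real.cos_two_pi_sub, e1, Real.cos_pi_sub, Real.cos_pi_div_three]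
    norm_num
  have hsub := intermediate_value_Icc' (by positivity : (0:ℝ) ≤ 2 * Real.pi / 3) hc
  rw [h0, h1] at hsub
  obtain ⟨x, _, hx⟩ := hsub ht
  exact ⟨x, hx⟩

section wave
variable (x : ℝ)

def pw : ℤ × ℤ → ℂ := fun n => Complex.exp ((x : ℂ) * Complex.I) ^ (n.1 - n.2)

lemma pw_norm (n : ℤ × ℤ) : ‖pw x n‖ = 1 := by
  rw [pw, norm_zpow]
  rw [Complex.norm_exp_ofReal_mul_I]
  simp

lemma hsymb : (gsym x : ℂ) = (2 * Complex.exp ((x:ℂ) * Complex.I)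
    + 2 * (Complex.exp ((x:ℂ) * Complex.I))⁻¹ + Complex.exp ((x:ℂ) * Complex.I) ^ (2:ℤ)
    + (Complex.exp ((x:ℂ) * Complex.I) ^ (2:ℤ))⁻¹) / 6 := by
  set E := Complex.exp ((x:ℂ) * Complex.I) with hE
  have hc1 : E + E⁻¹ = 2 * Complex.cos x := by
    rw [hE, ← Complex.exp_neg, ← neg_mul]
    exact (Complex.two_cos _).symm
  have hc2 : E ^ (2:ℤ) + (E ^ (2:ℤ))⁻¹ = 2 * Complex.cos ((2 * x : ℝ) : ℂ) := by
    have h2 : E ^ (2:ℤ) = Complex.exp (((2*x : ℝ) : ℂ) * Complex.I) := by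
      rw [hE, ← Complex.exp_int_mul]
      congr 1
      push_cast
      ring
    rw [h2, ← Complex.exp_neg, ← neg_mul]
    exact (Complex.two_cos _).symm
  have hg : (gsym x : ℂ) = (1/3) * (2 * Complex.cos (x:ℂ) + Complex.cos ((2*x : ℝ) : ℂ)) := by
    rw [gsym]
    push_cast [Complex.ofReal_cos]
    norm_num
  rw [hg]
  linear_combination (-(1/3) : ℂ) * hc1 - (1/6 : ℂ) * hc2
end wave

lemma lapT_pw (x : ℝ) (n : ℤ × ℤ) : lapT (pw x) n = (gsym x : ℂ) * pw x n := by
  set E := Complex.exp ((x:ℂ) * Complex.I) with hE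
  have hE0 : E ≠ 0 := Complex.exp_ne_zero _
  set d : ℤ := n.1 - n.2 with hd
  have key : ∀ k : ℤ, E ^ (d + k) = E ^ d * E ^ k := fun k => zpow_add₀ hE0 d k
  have h1 : pw x (n.1 + 1, n.2) = E ^ d * E := by
    show E ^ (n.1 + 1 - n.2) = _
    rw [show n.1 + 1 - n.2 = d + 1 by omega, key, zpow_one]
  have h2 : pw x (n.1 - 1, n.2) = E ^ d * E⁻¹ := by
    show E ^ (n.1 - 1 - n.2) = _
    rw [show n.1 - 1 - n.2 = d + (-1) by omega, key, zpow_neg, zpow_one]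
  have h3 : pw x (n.1, n.2 + 1) = E ^ d * E⁻¹ := by
    show E ^ (n.1 - (n.2 + 1)) = _
    rw [show n.1 - (n.2 + 1) = d + (-1) by omega, key, zpow_neg, zpow_one]
  have h4 : pw x (n.1, n.2 - 1) = E ^ d * E := by
    show E ^ (n.1 - (n.2 - 1)) = _
    rw [show n.1 - (n.2 - 1) = d + 1 by omega, key, zpow_one]
  have h5 : pw x (n.1 + 1, n.2 - 1) = E ^ d * E ^ (2:ℤ) := by
    show E ^ (n.1 + 1 - (n.2 - 1)) = _
    rw [show n.1 + 1 - (n.2 - 1) = d + 2 by omega, key]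
  have h6 : pw x (n.1 - 1, n.2 + 1) = E ^ d * (E ^ (2:ℤ))⁻¹ := by
    show E ^ (n.1 - 1 - (n.2 + 1)) = _
    rw [show n.1 - 1 - (n.2 + 1) = d + (-2) by omega, key, zpow_neg]
  have hw : pw x n = E ^ d := rfl
  rw [lapT, h1, h2, h3, h4, h5, h6, hw, hsymb x, ← hE]
  ring

def SB (k : ℕ) : Finset (ℤ × ℤ) := Finset.Icc (-(k:ℤ)) k ×ˢ Finset.Icc (-(k:ℤ)) k

lemma mem_SB {k : ℕ} {n : ℤ × ℤ} :
    n ∈ SB k ↔ -(k:ℤ) ≤ n.1 ∧ n.1 ≤ k ∧ -(k:ℤ) ≤ n.2 ∧ n.2 ≤ k := by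
  simp [SB, Finset.mem_product, Finset.mem_Icc, and_assoc]

lemma card_SB (k : ℕ) : (SB k).card = (2 * k + 1) ^ 2 := by
  rw [SB, Finset.card_product, Int.card_Icc]
  rw [show ((k:ℤ) + 1 - (-(k:ℤ))).toNat = 2 * k + 1 by omega]
  ring

def wcut (x : ℝ) (N : ℕ) : ℤ × ℤ → ℂ := fun n =>
  if -(N:ℤ) ≤ n.1 ∧ n.1 ≤ N ∧ -(N:ℤ) ≤ n.2 ∧ n.2 ≤ N then pw x n else 0

lemma wcut_eq_zero {x : ℝ} {N : ℕ} {n : ℤ × ℤ} (h : n ∉ SB N) : wcut x N n = 0 := by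
  rw [wcut, if_neg]
  rwa [mem_SB] at h

lemma wcut_norm_le (x : ℝ) (N : ℕ) (n : ℤ × ℤ) : ‖wcut x N n‖ ≤ 1 := by
  rw [wcut]
  split
  · rw [pw_norm]
  · simp

lemma wcut_mem (x : ℝ) (N : ℕ) : Memℓp (wcut x N) 2 := by
  rw [memℓp_gen_iff (by norm_num : (0:ℝ) < (2 : ℝ≥0∞).toReal)]
  apply summable_of_ne_finset_zero (s := SB N)
  intro n hn
  rw [wcut_eq_zero hn]
  simp [Real.zero_rpow]

lemma wcut_normsq (x : ℝ) (N : ℕ) :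
    ∑' n, ‖wcut x N n‖ ^ 2 = (((2 * N + 1) ^ 2 : ℕ) : ℝ) := by
  rw [tsum_eq_sum (s := SB N) (fun b hb => by rw [wcut_eq_zero hb]; simp)]
  have h1 : ∀ n ∈ SB N, ‖wcut x N n‖ ^ 2 = 1 := fun n hn => by
    rw [wcut, if_pos (mem_SB.mp hn), pw_norm, one_pow]
  rw [Finset.sum_congr rfl h1, Finset.sum_const, card_SB, nsmul_eq_mul, mul_one]

def res (x : ℝ) (N : ℕ) : ℤ × ℤ → ℂ := fun n =>
  (gsym x : ℂ) * wcut x N n - lapT (wcut x N) n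

lemma res_eq_zero_outer {x : ℝ} {N : ℕ} {n : ℤ × ℤ} (h : n ∉ SB (N + 1)) :
    res x N n = 0 := by
  rw [mem_SB] at h
  push_cast at h
  simp only [res, lapT, wcut]
  rw [if_neg (by omega), if_neg (by omega), if_neg (by omega), if_neg (by omega),
    if_neg (by omega), if_neg (by omega), if_neg (by omega)]
  ring

lemma res_eq_zero_inner {x : ℝ} {N : ℕ} {n : ℤ × ℤ} (hN : 1 ≤ N) (h : n ∈ SB (N - 1)) :
    res x N n = 0 := by
  rw [mem_SB] at h
  have hc : ((N - 1 : ℕ) : ℤ) = (N : ℤ) - 1 := by omega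
  rw [hc] at h
  simp only [res, lapT, wcut]
  rw [if_pos (by omega), if_pos (by omega), if_pos (by omega), if_pos (by omega),
    if_pos (by omega), if_pos (by omega), if_pos (by omega)]
  have hlap := lapT_pw x n
  rw [lapT] at hlap
  rw [hlap]
  ring

lemma res_norm_le {x : ℝ} (N : ℕ) (hg : |gsym x| ≤ 1) (n : ℤ × ℤ) :
    ‖res x N n‖ ≤ 2 := by
  rw [res]
  refine (norm_sub_le _ _).trans ?_
  have h1 : ‖(gsym x : ℂ) * wcut x N n‖ ≤ 1 := by
    rw [norm_mul, Complex.norm_real]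
    calc ‖gsym x‖ * ‖wcut x N n‖ ≤ 1 * 1 :=
      mul_le_mul (by rwa [Real.norm_eq_abs]) (wcut_norm_le x N n) (norm_nonneg _) zero_le_one
    _ = 1 := by ring
  have h2 : ‖lapT (wcut x N) n‖ ≤ 1 := by
    rw [lapT, norm_mul]
    have : ‖(1/6 : ℂ)‖ = 1/6 := by norm_num
    rw [this]
    have hb : ‖wcut x N (n.1 + 1, n.2) + wcut x N (n.1 - 1, n.2) + wcut x N (n.1, n.2 + 1)
        + wcut x N (n.1, n.2 - 1) + wcut x N (n.1 + 1, n.2 - 1)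
        + wcut x N (n.1 - 1, n.2 + 1)‖ ≤ 6 := by
      calc _ ≤ ‖wcut x N (n.1 + 1, n.2) + wcut x N (n.1 - 1, n.2) + wcut x N (n.1, n.2 + 1)
          + wcut x N (n.1, n.2 - 1) + wcut x N (n.1 + 1, n.2 - 1)‖
          + ‖wcut x N (n.1 - 1, n.2 + 1)‖ := norm_add_le _ _
        _ ≤ _ := by
          have b5 : ‖wcut x N (n.1 + 1, n.2) + wcut x N (n.1 - 1, n.2) + wcut x N (n.1, n.2 + 1)
              + wcut x N (n.1, n.2 - 1) + wcut x N (n.1 + 1, n.2 - 1)‖ ≤ 5 := by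
            calc _ ≤ ‖wcut x N (n.1 + 1, n.2) + wcut x N (n.1 - 1, n.2) + wcut x N (n.1, n.2 + 1)
                + wcut x N (n.1, n.2 - 1)‖ + ‖wcut x N (n.1 + 1, n.2 - 1)‖ := norm_add_le _ _
              _ ≤ _ := by
                have b4 : ‖wcut x N (n.1 + 1, n.2) + wcut x N (n.1 - 1, n.2)
                    + wcut x N (n.1, n.2 + 1) + wcut x N (n.1, n.2 - 1)‖ ≤ 4 := by
                  calc _ ≤ ‖wcut x N (n.1 + 1, n.2) + wcut x N (n.1 - 1, n.2)
                      + wcut x N (n.1, n.2 + 1)‖ + ‖wcut x N (n.1, n.2 - 1)‖ := norm_add_le _ _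
                    _ ≤ _ := by
                      have b3 : ‖wcut x N (n.1 + 1, n.2) + wcut x N (n.1 - 1, n.2)
                          + wcut x N (n.1, n.2 + 1)‖ ≤ 3 := by
                        calc _ ≤ ‖wcut x N (n.1 + 1, n.2) + wcut x N (n.1 - 1, n.2)‖
                            + ‖wcut x N (n.1, n.2 + 1)‖ := norm_add_le _ _
                          _ ≤ _ := by
                            have b2 := (norm_add_le (wcut x N (n.1 + 1, n.2))
                              (wcut x N (n.1 - 1, n.2)))
                            have := wcut_norm_le x N (n.1 + 1, n.2)
                            have := wcut_norm_le x N (n.1 - 1, n.2)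
                            have := wcut_norm_le x N (n.1, n.2 + 1)
                            linarith
                      have := wcut_norm_le x N (n.1, n.2 - 1)
                      linarith
                have := wcut_norm_le x N (n.1 + 1, n.2 - 1)
                linarith
          have := wcut_norm_le x N (n.1 - 1, n.2 + 1)
          linarith
    calc (1/6 : ℝ) * _ ≤ (1/6) * 6 := by linarith [hb]
      _ = 1 := by norm_num
  linarith

lemma SB_subset {a b : ℕ} (h : a ≤ b) : SB a ⊆ SB b := by
  intro n hn
  rw [mem_SB] at hn ⊢
  have : (a:ℤ) ≤ b := by exact_mod_cast h
  omega

lemma res_normsq_le {x : ℝ} {N : ℕ} (hN : 1 ≤ N) (hg : |gsym x| ≤ 1) :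
    ∑' n, ‖res x N n‖ ^ 2 ≤ 4 * (16 * N + 8) := by
  rw [tsum_eq_sum (s := SB (N+1)) (fun b hb => by rw [res_eq_zero_outer hb]; simp)]
  have hsub : SB (N - 1) ⊆ SB (N + 1) := SB_subset (by omega)
  rw [← Finset.sum_subset (Finset.sdiff_subset (s := SB (N+1)) (t := SB (N-1)))
    (fun y hy hy2 => ?_)]
  · have hb : ∀ n ∈ SB (N+1) \ SB (N-1), ‖res x N n‖ ^ 2 ≤ 4 := by
      intro n _
      have := res_norm_le N hg n
      nlinarith [norm_nonneg (res x N n)]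
    calc ∑ n ∈ SB (N+1) \ SB (N-1), ‖res x N n‖ ^ 2
        ≤ (SB (N+1) \ SB (N-1)).card • (4:ℝ) := Finset.sum_le_card_nsmul _ _ 4 hb
      _ = ((SB (N+1) \ SB (N-1)).card : ℝ) * 4 := by rw [nsmul_eq_mul]
      _ ≤ 4 * (16 * N + 8) := by
          rw [Finset.card_sdiff_of_subset hsub, card_SB, card_SB]
          have hcard : (2 * (N + 1) + 1) ^ 2 - (2 * (N - 1) + 1) ^ 2 = 16 * N + 8 := by
            obtain ⟨M, rfl⟩ : ∃ M, N = M + 1 := ⟨N - 1, by omega⟩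
            simp only [Nat.add_sub_cancel]
            ring_nf
            omega
          rw [hcard]
          push_cast
          linarith
  · have : y ∈ SB (N - 1) := by
      by_contra hc
      exact hy2 (Finset.mem_sdiff.mpr ⟨hy, hc⟩)
    rw [res_eq_zero_inner hN this]
    simp

lemma spec_superset (T : H2 →L[ℂ] H2)
    (hT : ∀ (f : H2) (n : ℤ × ℤ), T f n = lapT (⇑f) n) :
    Complex.ofReal '' Set.Icc (-(1/2) : ℝ) 1 ⊆ spectrum ℂ T := by
  rintro z ⟨t, ht, rfl⟩
  by_contra hz
  rw [spectrum.notMem_iff] at hz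
  obtain ⟨u, hu⟩ := hz
  set C := ‖(↑u⁻¹ : H2 →L[ℂ] H2)‖ with hC
  have hC0 : 0 ≤ C := norm_nonneg _
  obtain ⟨x, hx⟩ := gsym_surj ht
  have hg : |gsym x| ≤ 1 := by
    rw [hx, abs_le]
    exact ⟨by linarith [ht.1], ht.2⟩
  obtain ⟨N0, hN0⟩ := exists_nat_gt (100 * (C ^ 2 + 1))
  set N := N0 + 1 with hN
  set FN : H2 := ⟨wcut x N, wcut_mem x N⟩ with hFN
  set A : H2 →L[ℂ] H2 := algebraMap ℂ (H2 →L[ℂ] H2) (↑t) - T with hA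
  have hAFN : ∀ n, (A FN) n = res x N n := by
    intro n
    rw [hA, ContinuousLinearMap.sub_apply, lp.coeFn_sub, Pi.sub_apply]
    have e1 : (algebraMap ℂ (H2 →L[ℂ] H2) (↑t)) FN = (↑t : ℂ) • FN := by
      rw [Algebra.algebraMap_eq_smul_one, ContinuousLinearMap.smul_apply,
        ContinuousLinearMap.one_apply]
    rw [e1, lp.coeFn_smul, Pi.smul_apply, smul_eq_mul, hT FN n]
    simp only [res, hx]
    rfl
  have hF2 : ‖FN‖ ^ 2 = (((2 * N + 1) ^ 2 : ℕ) : ℝ) := by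
    rw [norm_sq_eq]
    exact wcut_normsq x N
  have hA2 : ‖A FN‖ ^ 2 ≤ 4 * (16 * N + 8) := by
    rw [norm_sq_eq, tsum_congr (fun n => by rw [hAFN n])]
    exact res_normsq_le (by omega) hg
  have hinv : ‖FN‖ ≤ C * ‖A FN‖ := by
    have h1 : (↑u⁻¹ : H2 →L[ℂ] H2) (A FN) = FN := by
      rw [← hu]
      calc (↑u⁻¹ : H2 →L[ℂ] H2) ((↑u : H2 →L[ℂ] H2) FN)
          = ((↑u⁻¹ * ↑u : H2 →L[ℂ] H2)) FN := by rw [ContinuousLinearMap.mul_apply]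
        _ = FN := by rw [u.inv_mul]; rfl
    calc ‖FN‖ = ‖(↑u⁻¹ : H2 →L[ℂ] H2) (A FN)‖ := by rw [h1]
      _ ≤ C * ‖A FN‖ := ContinuousLinearMap.le_opNorm _ _
  have hsq : ‖FN‖ ^ 2 ≤ C ^ 2 * (4 * (16 * N + 8)) := by
    have h2 : ‖FN‖ ^ 2 ≤ (C * ‖A FN‖) ^ 2 := pow_le_pow_left₀ (norm_nonneg _) hinv 2
    have h3 : (C * ‖A FN‖) ^ 2 = C ^ 2 * ‖A FN‖ ^ 2 := by ring
    have h4 : C ^ 2 * ‖A FN‖ ^ 2 ≤ C ^ 2 * (4 * (16 * N + 8)) :=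
      mul_le_mul_of_nonneg_left hA2 (sq_nonneg C)
    linarith
  rw [hF2] at hsq
  have hn1 : (1 : ℝ) ≤ (N : ℝ) := by
    rw [hN]; push_cast; linarith [Nat.cast_nonneg (α := ℝ) N0]
  have hnC : 100 * (C ^ 2 + 1) < (N : ℝ) := by
    rw [hN]; push_cast; linarith
  push_cast at hsq
  nlinarith [sq_nonneg C, mul_le_mul_of_nonneg_left hn1 (sq_nonneg C),
    mul_lt_mul_of_pos_right hnC (show (0:ℝ) < (N:ℝ) by linarith)]

end TriAux

/-- The spectrum of the triangular-lattice Laplacian `Δ_T`, as a bounded operator on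
`ℓ²(ℤ²,ℂ)`, equals the closed interval `[-1/2, 1]`. -/
theorem spectrum_triangular_laplacian (T : H2 →L[ℂ] H2)
    (hT : ∀ (f : H2) (n : ℤ × ℤ), T f n = lapT (⇑f) n) :
    spectrum ℂ T = Complex.ofReal '' Set.Icc (-(1/2) : ℝ) 1 :=
  Set.Subset.antisymm (TriAux.spec_subset T hT) (TriAux.spec_superset T hT)
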